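/- Let Y, Ŷ, A, D be as above with P(Ŷ = Y | D = 1) = 1. Fix y, ŷ ∈ [K], let p_y⁺ = P(Y=y, A=1), p_y = P(Y=y) with 0 < p_y⁺ < p_y, p_D = P(D=1), q_y = P(Y=y | D=1), q_y⁺ = P(Y=y, A=1 | D=1), C⁺ = P(Ŷ=ŷ | D=0, Y=y, A=1), C⁻ = P(Ŷ=ŷ | D=0, Y=y, A=0). Then the equalized odds gap Δeq.odds(y,ŷ) := P(Ŷ=ŷ | A=1, Y=y) − P(Ŷ=ŷ | A=0, Y=y) equals (p_D / (p_y⁺(p_y − p_y⁺)))·(C⁺ − 𝟙{y=ŷ})·(q_y p_y⁺ − p_y q_y⁺) + (C⁺ − C⁻)·(1 − p_D(q_y − q_y⁺)/(p_y − p_y⁺)). -/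
import Mathlib


open scoped BigOperators Classical

noncomputable def pr {Ω : Type*} [Fintype Ω] (P : Ω → ℝ) (E : Set Ω) : ℝ :=
  ∑ ω, if ω ∈ E then P ω else 0

noncomputable def cpr {Ω : Type*} [Fintype Ω] (P : Ω → ℝ) (E F : Set Ω) : ℝ :=
  pr P (E ∩ F) / pr P F

lemma pr_congr {Ω : Type*} [Fintype Ω] (P : Ω → ℝ) {E F : Set Ω}
    (h : ∀ ω, ω ∈ E ↔ ω ∈ F) : pr P E = pr P F := by
  unfold pr; exact Finset.sum_congr rfl (fun ω _ => by simp [h ω])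

lemma pr_split {Ω : Type*} [Fintype Ω] (P : Ω → ℝ) (E S : Set Ω) :
    pr P E = pr P (E ∩ S) + pr P (E ∩ Sᶜ) := by
  unfold pr; rw [← Finset.sum_add_distrib]
  refine Finset.sum_congr rfl (fun ω _ => ?_)
  by_cases h : ω ∈ E <;> by_cases h2 : ω ∈ S <;> simp [h, h2]

lemma pr_nonneg {Ω : Type*} [Fintype Ω] {P : Ω → ℝ} (hP0 : ∀ ω, 0 ≤ P ω)
    (E : Set Ω) : 0 ≤ pr P E := by
  refine Finset.sum_nonneg (fun ω _ => ?_)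
  split
  · exact hP0 ω
  · exact le_refl 0

lemma pr_le {Ω : Type*} [Fintype Ω] {P : Ω → ℝ} (hP0 : ∀ ω, 0 ≤ P ω)
    {E F : Set Ω} (h : E ⊆ F) : pr P E ≤ pr P F := by
  refine Finset.sum_le_sum (fun ω _ => ?_)
  by_cases hE : ω ∈ E
  · simp [hE, h hE]
  · simp only [hE, if_false]
    split
    · exact hP0 ω
    · exact le_refl 0

lemma pr_zero_of_subset {Ω : Type*} [Fintype Ω] {P : Ω → ℝ} (hP0 : ∀ ω, 0 ≤ P ω)
    {E F : Set Ω} (h : E ⊆ F) (hF : pr P F = 0) : pr P E = 0 :=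
  le_antisymm (hF ▸ pr_le hP0 h) (pr_nonneg hP0 E)

/-- equalized odds gap of the memorizing classifier. -/
theorem stmt_2 {Ω : Type*} [Fintype Ω] (P : Ω → ℝ)
    (hP0 : ∀ ω, 0 ≤ P ω) (hP1 : ∑ ω, P ω = 1)
    {K : ℕ} (Y Yh : Ω → Fin K) (A D : Ω → Bool)
    (hmem : cpr P {ω | Yh ω = Y ω} {ω | D ω = true} = 1)
    (y yh : Fin K)
    (hD1 : 0 < pr P {ω | D ω = true})
    (hYA1 : 0 < pr P ({ω | Y ω = y} ∩ {ω | A ω = true}))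
    (hYA0 : 0 < pr P ({ω | Y ω = y} ∩ {ω | A ω = false}))
    (hD0YA1 : 0 < pr P ({ω | D ω = false} ∩ ({ω | Y ω = y} ∩ {ω | A ω = true})))
    (hD0YA0 : 0 < pr P ({ω | D ω = false} ∩ ({ω | Y ω = y} ∩ {ω | A ω = false})))
    (pD py pyp qy qyp Cp Cm : ℝ)
    (hpD : pD = pr P {ω | D ω = true})
    (hpy : py = pr P {ω | Y ω = y})
    (hpyp : pyp = pr P ({ω | Y ω = y} ∩ {ω | A ω = true}))
    (hpyp0 : 0 < pyp) (hpyppy : pyp < py)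
    (hqy : qy = cpr P {ω | Y ω = y} {ω | D ω = true})
    (hqyp : qyp = cpr P ({ω | Y ω = y} ∩ {ω | A ω = true}) {ω | D ω = true})
    (hCp : Cp = cpr P {ω | Yh ω = yh} ({ω | D ω = false} ∩ ({ω | Y ω = y} ∩ {ω | A ω = true})))
    (hCm : Cm = cpr P {ω | Yh ω = yh} ({ω | D ω = false} ∩ ({ω | Y ω = y} ∩ {ω | A ω = false}))) :
    cpr P {ω | Yh ω = yh} ({ω | A ω = true} ∩ {ω | Y ω = y})
      - cpr P {ω | Yh ω = yh} ({ω | A ω = false} ∩ {ω | Y ω = y})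
      = pD / (pyp * (py - pyp)) * (Cp - (if y = yh then (1:ℝ) else 0)) * (qy * pyp - py * qyp)
        + (Cp - Cm) * (1 - pD * (qy - qyp) / (py - pyp)) := by
  have hDne : pr P {ω | D ω = true} ≠ 0 := ne_of_gt hD1
  -- null set from memorization
  have hmz : pr P ({ω | Yh ω = Y ω}ᶜ ∩ {ω | D ω = true}) = 0 := by
    have h1 : pr P ({ω | Yh ω = Y ω} ∩ {ω | D ω = true}) = pr P {ω | D ω = true} := by
      have := hmem
      unfold cpr at this
      field_simp at this
      linarith [this]
    have h2 := pr_split P {ω | D ω = true} {ω | Yh ω = Y ω}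
    have h3 : pr P ({ω | D ω = true} ∩ {ω | Yh ω = Y ω})
        = pr P ({ω | Yh ω = Y ω} ∩ {ω | D ω = true}) :=
      pr_congr P (fun ω => by simp [Set.mem_inter_iff]; tauto)
    have h4 : pr P ({ω | D ω = true} ∩ {ω | Yh ω = Y ω}ᶜ)
        = pr P ({ω | Yh ω = Y ω}ᶜ ∩ {ω | D ω = true}) :=
      pr_congr P (fun ω => by simp [Set.mem_inter_iff]; tauto)
    linarith
  have hs1def : pr P (({ω | Y ω = y} ∩ {ω | A ω = true}) ∩ {ω | D ω = true})
      = pr P (({ω | Y ω = y} ∩ {ω | A ω = true}) ∩ {ω | D ω = true}) := rfl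
  obtain ⟨s1, hs1def⟩ :
      ∃ s, s = pr P (({ω | Y ω = y} ∩ {ω | A ω = true}) ∩ {ω | D ω = true}) := ⟨_, rfl⟩
  obtain ⟨s0, hs0def⟩ :
      ∃ s, s = pr P (({ω | Y ω = y} ∩ {ω | A ω = false}) ∩ {ω | D ω = true}) := ⟨_, rfl⟩
  obtain ⟨t1, ht1def⟩ :
      ∃ t, t = pr P ({ω | D ω = false} ∩ ({ω | Y ω = y} ∩ {ω | A ω = true})) := ⟨_, rfl⟩
  obtain ⟨t0, ht0def⟩ :
      ∃ t, t = pr P ({ω | D ω = false} ∩ ({ω | Y ω = y} ∩ {ω | A ω = false})) := ⟨_, rfl⟩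
  -- s1 = pD * qyp
  have hs1 : s1 = pD * qyp := by
    rw [hqyp, hpD, hs1def]; unfold cpr; field_simp
  -- py = pyp + pr(Y∩A=f)
  have hsplitA : pr P {ω | Y ω = y}
      = pr P ({ω | Y ω = y} ∩ {ω | A ω = true})
        + pr P ({ω | Y ω = y} ∩ {ω | A ω = false}) := by
    rw [pr_split P {ω | Y ω = y} {ω | A ω = true}]
    congr 1
    exact pr_congr P (fun ω => by
      cases h : A ω <;> simp [Set.mem_inter_iff, h])
  -- s1 + s0 = pD * qy
  have hqyD : s1 + s0 = pD * qy := by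
    rw [hqy, hpD]; unfold cpr
    have h1 : pr P ({ω | Y ω = y} ∩ {ω | D ω = true}) = s1 + s0 := by
      rw [pr_split P ({ω | Y ω = y} ∩ {ω | D ω = true}) {ω | A ω = true},
        hs1def, hs0def]
      congr 1
      · exact pr_congr P (fun ω => by simp [Set.mem_inter_iff]; tauto)
      · exact pr_congr P (fun ω => by
          simp [Set.mem_inter_iff]
          cases h : A ω <;> simp [h] <;> tauto)
    rw [h1]; field_simp
  -- t1 = pyp - s1
  have ht1 : t1 = pyp - s1 := by
    have hsp := pr_split P ({ω | Y ω = y} ∩ {ω | A ω = true}) {ω | D ω = true}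
    have h2 : pr P (({ω | Y ω = y} ∩ {ω | A ω = true}) ∩ {ω | D ω = true}ᶜ)
        = pr P ({ω | D ω = false} ∩ ({ω | Y ω = y} ∩ {ω | A ω = true})) :=
      pr_congr P (fun ω => by
        simp [Set.mem_inter_iff]
        cases h : D ω <;> simp [h] <;> tauto)
    rw [← hs1def, ← hpyp] at hsp
    rw [← ht1def] at h2
    linarith
  -- t0 = (py - pyp) - s0
  have hYAf : pr P ({ω | Y ω = y} ∩ {ω | A ω = false}) = py - pyp := by
    rw [hpy, hpyp]; linarith [hsplitA]
  have ht0 : t0 = (py - pyp) - s0 := by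
    have hsp := pr_split P ({ω | Y ω = y} ∩ {ω | A ω = false}) {ω | D ω = true}
    have h2 : pr P (({ω | Y ω = y} ∩ {ω | A ω = false}) ∩ {ω | D ω = true}ᶜ)
        = pr P ({ω | D ω = false} ∩ ({ω | Y ω = y} ∩ {ω | A ω = false})) :=
      pr_congr P (fun ω => by
        simp [Set.mem_inter_iff]
        cases h : D ω <;> simp [h] <;> tauto)
    rw [← hs0def, hYAf] at hsp
    rw [← ht0def] at h2
    linarith
  -- numerator on D=1 side
  have hnum : ∀ (a : Bool),
      pr P (({ω | Yh ω = yh} ∩ ({ω | A ω = a} ∩ {ω | Y ω = y})) ∩ {ω | D ω = true})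
        = (if y = yh then (1:ℝ) else 0)
            * pr P (({ω | Y ω = y} ∩ {ω | A ω = a}) ∩ {ω | D ω = true}) := by
    intro a
    by_cases hyy : y = yh
    · rw [if_pos hyy, one_mul]
      have hsplit := pr_split P (({ω | Y ω = y} ∩ {ω | A ω = a}) ∩ {ω | D ω = true})
        {ω | Yh ω = Y ω}
      have hz : pr P ((({ω | Y ω = y} ∩ {ω | A ω = a}) ∩ {ω | D ω = true}) ∩ {ω | Yh ω = Y ω}ᶜ) = 0 := by
        refine pr_zero_of_subset hP0 (fun ω hω => ?_) hmz
        simp only [Set.mem_inter_iff, Set.mem_compl_iff, Set.mem_setOf_eq] at hω ⊢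
        exact ⟨hω.2, hω.1.2⟩
      have he : pr P ((({ω | Y ω = y} ∩ {ω | A ω = a}) ∩ {ω | D ω = true}) ∩ {ω | Yh ω = Y ω})
          = pr P (({ω | Yh ω = yh} ∩ ({ω | A ω = a} ∩ {ω | Y ω = y})) ∩ {ω | D ω = true}) := by
        refine pr_congr P (fun ω => ?_)
        simp only [Set.mem_inter_iff, Set.mem_setOf_eq]
        constructor
        · rintro ⟨⟨⟨h1, h2⟩, h3⟩, h4⟩
          exact ⟨⟨by rw [h4, h1, hyy], h2, h1⟩, h3⟩
        · rintro ⟨⟨h1, h2, h3⟩, h4⟩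
          exact ⟨⟨⟨h3, h2⟩, h4⟩, by rw [h1, h3, hyy]⟩
      linarith
    · rw [if_neg hyy, zero_mul]
      refine pr_zero_of_subset hP0 (fun ω hω => ?_) hmz
      simp only [Set.mem_inter_iff, Set.mem_compl_iff, Set.mem_setOf_eq] at hω ⊢
      refine ⟨fun h => hyy ?_, hω.2⟩
      rw [← hω.1.2.2, ← hω.1.1, h]
  -- full numerators
  have hCpnum : pr P ({ω | Yh ω = yh} ∩ ({ω | D ω = false} ∩ ({ω | Y ω = y} ∩ {ω | A ω = true})))
      = Cp * t1 := by
    rw [hCp, ht1def]; unfold cpr; field_simp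
  have hCmnum : pr P ({ω | Yh ω = yh} ∩ ({ω | D ω = false} ∩ ({ω | Y ω = y} ∩ {ω | A ω = false})))
      = Cm * t0 := by
    rw [hCm, ht0def]; unfold cpr; field_simp
  have hnumfull : ∀ (a : Bool) (s C : ℝ),
      s = pr P (({ω | Y ω = y} ∩ {ω | A ω = a}) ∩ {ω | D ω = true}) →
      pr P ({ω | Yh ω = yh} ∩ ({ω | D ω = false} ∩ ({ω | Y ω = y} ∩ {ω | A ω = a}))) = C →
      pr P ({ω | Yh ω = yh} ∩ ({ω | A ω = a} ∩ {ω | Y ω = y}))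
        = (if y = yh then (1:ℝ) else 0) * s + C := by
    intro a s C hs hC
    rw [pr_split P ({ω | Yh ω = yh} ∩ ({ω | A ω = a} ∩ {ω | Y ω = y})) {ω | D ω = true}]
    rw [hnum a, ← hs]
    congr 1
    rw [← hC]
    refine pr_congr P (fun ω => by
      simp only [Set.mem_inter_iff, Set.mem_compl_iff, Set.mem_setOf_eq]
      cases h : D ω <;> simp [h] <;> tauto)
  have hn1 := hnumfull true s1 (Cp * t1) hs1def hCpnum
  have hn0 := hnumfull false s0 (Cm * t0) hs0def hCmnum
  -- denominators
  have hden1 : pr P ({ω | A ω = true} ∩ {ω | Y ω = y}) = pyp := by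
    rw [hpyp]; exact pr_congr P (fun ω => by simp [Set.mem_inter_iff]; tauto)
  have hden0 : pr P ({ω | A ω = false} ∩ {ω | Y ω = y}) = py - pyp := by
    rw [← hYAf]; exact pr_congr P (fun ω => by simp [Set.mem_inter_iff]; tauto)
  unfold cpr
  rw [hn1, hn0, hden1, hden0, ht1, ht0]
  have hpypne : pyp ≠ 0 := ne_of_gt hpyp0
  have hpydne : py - pyp ≠ 0 := ne_of_gt (by linarith)
  have hpDne : pD ≠ 0 := by rw [hpD]; exact hDne
  have hqyps : qyp = s1 / pD := by rw [hs1]; field_simp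
  have hqys : qy = (s1 + s0) / pD := by field_simp; linarith [hqyD]
  rw [hqyps, hqys]
  by_cases hyy : y = yh
  · rw [if_pos hyy]
    field_simp
    ring
  · rw [if_neg hyy]
    field_simp
    ring
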